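/- For sequences s, t over a well order α with least element 0, the following are equivalent: (a) s ≤_w t; (b) ⟨0⟩*s ≤_s ⟨0⟩*t; (c) ⟨β⟩*s ≤_s ⟨γ⟩*t for all β ≤ γ in α such that β is less than or equal to every element of t. -/

import Mathlib

/-- The weak gap condition on finite sequences over a linear order. -/
def WeakGap {α : Type*} [LinearOrder α] (s t : List α) : Prop :=
  ∃ f : Fin s.length → Fin t.length,
    StrictMono f ∧
    (∀ i, s.get i ≤ t.get (f i)) ∧
    ∀ (i : ℕ) (h : i + 1 < s.length) (j : Fin t.length),
      f ⟨i, Nat.lt_of_succ_lt h⟩ < j → j < f ⟨i + 1, h⟩ → s.get ⟨i + 1, h⟩ ≤ t.get j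

/-- The strong gap condition on finite sequences over a linear order:
as the weak one, but additionally respecting the outer gap. -/
def StrongGap {α : Type*} [LinearOrder α] (s t : List α) : Prop :=
  ∃ f : Fin s.length → Fin t.length,
    StrictMono f ∧
    (∀ i, s.get i ≤ t.get (f i)) ∧
    (∀ (i : ℕ) (h : i + 1 < s.length) (j : Fin t.length),
      f ⟨i, Nat.lt_of_succ_lt h⟩ < j → j < f ⟨i + 1, h⟩ → s.get ⟨i + 1, h⟩ ≤ t.get j) ∧
    ∀ (h : 0 < s.length) (j : Fin t.length), j < f ⟨0, h⟩ → s.get ⟨0, h⟩ ≤ t.get j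

lemma get_cons_pred {α : Type*} (γ : α) (t : List α) (j : Fin (γ :: t).length)
    (hj : 0 < j.val) (hb : j.val - 1 < t.length) :
    (γ :: t).get j = t.get ⟨j.val - 1, hb⟩ := by
  obtain ⟨m, hm⟩ := j
  cases m with
  | zero => simp at hj
  | succ k => rfl

lemma weakGap_of_strongGap_cons {α : Type*} [LinearOrder α] {s t : List α} {β γ : α}
    (h : StrongGap (β :: s) (γ :: t)) : WeakGap s t := by
  obtain ⟨g, hmono, hle, hgap, _⟩ := h
  have hpos : ∀ i : Fin s.length, 0 < (g i.succ).val := by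
    intro i
    have h0 : (⟨0, Nat.succ_pos _⟩ : Fin (β :: s).length) < i.succ := by
      simp [Fin.lt_def]
    have := hmono h0
    rw [Fin.lt_def] at this
    omega
  have hbnd : ∀ i : Fin s.length, (g i.succ).val - 1 < t.length := by
    intro i
    have h1 := (g i.succ).isLt
    simp only [List.length_cons] at h1
    have := hpos i
    omega
  refine ⟨fun i => ⟨(g i.succ).val - 1, hbnd i⟩, ?_, ?_, ?_⟩
  · intro i j hij
    have h1 := hmono (show i.succ < j.succ from Fin.succ_lt_succ_iff.mpr hij)
    rw [Fin.lt_def] at h1 ⊢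
    have := hpos i
    simp only [Fin.succ_mk, Fin.val_succ, Fin.val_mk] at *
    omega
  · intro i
    have h1 := hle i.succ
    rw [get_cons_pred γ t _ (hpos i) (hbnd i)] at h1
    exact h1
  · intro i hi j hj1 hj2
    have hi' : (i + 1) + 1 < (β :: s).length := by
      simp only [List.length_cons]; omega
    have key := hgap (i + 1) hi' j.succ ?_ ?_
    · exact key
    · rw [Fin.lt_def]
      have hv := Fin.lt_def.mp hj1
      have := hpos ⟨i, Nat.lt_of_succ_lt hi⟩
      simp only [Fin.succ_mk, Fin.val_succ, Fin.val_mk] at *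
      omega
    · rw [Fin.lt_def]
      have hv := Fin.lt_def.mp hj2
      have := hpos ⟨i + 1, hi⟩
      simp only [Fin.succ_mk, Fin.val_succ, Fin.val_mk] at *
      omega

lemma strongGap_cons_of_weakGap {α : Type*} [LinearOrder α] {s t : List α} {β γ : α}
    (hβγ : β ≤ γ) (hβt : ∀ x ∈ t, β ≤ x) (h : WeakGap s t) :
    StrongGap (β :: s) (γ :: t) := by
  obtain ⟨f, hmono, hle, hgap⟩ := h
  have hβ : ∀ j : Fin (γ :: t).length, β ≤ (γ :: t).get j := by
    intro j
    obtain ⟨m, hm⟩ := j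
    cases m with
    | zero => exact hβγ
    | succ k =>
      have hk : k < t.length := by simpa using Nat.lt_of_succ_lt_succ hm
      exact hβt _ (List.get_mem t ⟨k, hk⟩)
  rcases s with _ | ⟨a, s⟩
  · refine ⟨fun _ => ⟨0, Nat.succ_pos _⟩, ?_, ?_, ?_, ?_⟩
    · intro i j hij
      have hi := i.isLt
      have hj := j.isLt
      rw [Fin.lt_def] at hij
      simp only [List.length_cons, List.length_nil] at hi hj
      omega
    · intro i
      obtain ⟨m, hm⟩ := i
      simp only [List.length_cons, List.length_nil] at hm
      interval_cases m
      exact hβ _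
    · intro i hi
      simp only [List.length_cons, List.length_nil] at hi
      omega
    · intro h0 j hj
      rw [Fin.lt_def] at hj
      simp at hj
  · have h0 : 0 < (a :: s).length := Nat.succ_pos _
    have pf1 : ∀ i : Fin (β :: a :: s).length, i.val - 1 < (a :: s).length := by
      intro i; have := i.isLt; simp only [List.length_cons] at *; omega
    have pf2 : ∀ k : Fin (a :: s).length, (f k).val < (γ :: t).length := by
      intro k; have := (f k).isLt; simp only [List.length_cons] at *; omega
    have pf3 : ∀ k : Fin (a :: s).length, (f k).val + 1 < (γ :: t).length := by
      intro k; have := (f k).isLt; simp only [List.length_cons] at *; omega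
    refine ⟨fun i => if i.val = 0 then ⟨(f ⟨0, h0⟩).val, pf2 _⟩
        else ⟨(f ⟨i.val - 1, pf1 i⟩).val + 1, pf3 _⟩, ?_, ?_, ?_, ?_⟩
    · intro i j hij
      rw [Fin.lt_def] at hij ⊢
      obtain ⟨iv, hiv⟩ := i
      obtain ⟨jv, hjv⟩ := j
      simp only [Fin.val_mk] at hij ⊢
      rcases Nat.eq_zero_or_pos iv with hi0 | hi0
      · subst hi0
        rcases Nat.eq_zero_or_pos jv with hj0 | hj0
        · omega
        · rw [if_pos rfl, if_neg (by omega)]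
          simp only [Fin.val_mk]
          have : f ⟨0, h0⟩ ≤ f ⟨jv - 1, pf1 ⟨jv, hjv⟩⟩ :=
            hmono.monotone (by rw [Fin.mk_le_mk]; omega)
          rw [Fin.le_def] at this
          omega
      · rw [if_neg (by omega), if_neg (by omega)]
        simp only [Fin.val_mk]
        have : f ⟨iv - 1, pf1 ⟨iv, hiv⟩⟩ < f ⟨jv - 1, pf1 ⟨jv, hjv⟩⟩ :=
          hmono (by rw [Fin.mk_lt_mk]; omega)
        rw [Fin.lt_def] at this
        omega
    · intro i
      obtain ⟨iv, hiv⟩ := i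
      cases iv with
      | zero =>
        simp only [if_pos rfl]
        exact hβ _
      | succ k =>
        simp only [if_neg (Nat.succ_ne_zero k), Nat.add_sub_cancel]
        have h1 := hle ⟨k, by simp only [List.length_cons] at hiv ⊢; omega⟩
        calc (β :: a :: s).get ⟨k + 1, hiv⟩
            = (a :: s).get ⟨k, _⟩ := rfl
          _ ≤ t.get (f ⟨k, _⟩) := h1
          _ = (γ :: t).get ⟨(f ⟨k, _⟩).val + 1, pf3 _⟩ := rfl
    · intro i hi j hj1 hj2
      rw [Fin.lt_def] at hj1 hj2
      cases i with
      | zero =>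
        simp at hj1 hj2
        omega
      | succ k =>
        simp only [Fin.val_mk, if_neg (Nat.succ_ne_zero k),
          if_neg (Nat.succ_ne_zero (k+1)), Nat.add_sub_cancel] at hj1 hj2
        have hjpos : 0 < j.val := by omega
        have hjb : j.val - 1 < t.length := by
          have := (f ⟨k + 1, pf1 ⟨k + 1 + 1, hi⟩⟩).isLt
          omega
        have key := hgap k (by simp only [List.length_cons] at hi ⊢; omega)
          ⟨j.val - 1, hjb⟩ ?_ ?_
        · rw [get_cons_pred γ t j hjpos hjb]
          exact key
        · rw [Fin.lt_def]; simp only [Fin.val_mk]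
          omega
        · rw [Fin.lt_def]; simp only [Fin.val_mk]
          omega
    · intro hp j hj
      rw [Fin.lt_def] at hj
      simp only [Fin.val_mk, if_pos rfl] at hj
      exact hβ _

/-- Equivalence between the weak gap condition and strong gap conditions
with prepended heads. -/
theorem weakGap_iff_strongGap_cons {α : Type*} [LinearOrder α] [OrderBot α]
    [WellFoundedLT α] (s t : List α) :
    (WeakGap s t ↔ StrongGap ((⊥ : α) :: s) ((⊥ : α) :: t)) ∧
    (WeakGap s t ↔
      ∀ β γ : α, β ≤ γ → (∀ x ∈ t, β ≤ x) → StrongGap (β :: s) (γ :: t)) := by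
  constructor
  · exact ⟨fun h => strongGap_cons_of_weakGap le_rfl (fun x _ => bot_le) h,
      weakGap_of_strongGap_cons⟩
  · exact ⟨fun h β γ hβγ hβt => strongGap_cons_of_weakGap hβγ hβt h,
      fun h => weakGap_of_strongGap_cons (h ⊥ ⊥ le_rfl fun x _ => bot_le)⟩
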